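/- Let t > 0, h_t(θ) = csc(θ)·ψ_t(cot θ) with ψ_t(ζ) = arctan(t-ζ) + arctan(ζ). Then for θ ∈ (0, π): h_t(θ)² + 2 h_t'(θ)² - h_t''(θ) h_t(θ) = csc⁶(θ) · (2 ψ_t'(cot θ)² - ψ_t(cot θ)·ψ_t''(cot θ)). -/

import Mathlib

noncomputable def gfun (t : ℝ) : ℝ → ℝ :=
  fun θ : ℝ => (Real.arctan (t - Real.cos θ / Real.sin θ) +
          Real.arctan (Real.cos θ / Real.sin θ)) / Real.sin θ

noncomputable def pfun (t : ℝ) : ℝ → ℝ :=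
  fun ζ : ℝ => Real.arctan (t - ζ) + Real.arctan ζ

noncomputable def p1 (t : ℝ) (ζ : ℝ) : ℝ := (1 + ζ^2)⁻¹ - (1 + (t - ζ)^2)⁻¹

noncomputable def p2 (t : ℝ) (ζ : ℝ) : ℝ :=
  -(2*ζ) / (1+ζ^2)^2 - 2*(t-ζ) / (1+(t-ζ)^2)^2

lemma hasDerivAt_pfun (t ζ : ℝ) : HasDerivAt (pfun t) (p1 t ζ) ζ := by
  have h1 : HasDerivAt (fun ζ : ℝ => Real.arctan (t - ζ))
      ((1 + (t-ζ)^2)⁻¹ * (-1)) ζ := by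
    have := (Real.hasDerivAt_arctan (t - ζ)).comp ζ
      ((hasDerivAt_const ζ t).sub (hasDerivAt_id ζ))
    simpa [one_div, Function.comp_def] using this
  have h2 := Real.hasDerivAt_arctan ζ
  have := h1.add h2
  unfold pfun p1
  refine this.congr_deriv (Eq.symm ?_)
  rw [one_div]; ring

lemma deriv_pfun (t : ℝ) : deriv (pfun t) = p1 t := by
  funext ζ; exact (hasDerivAt_pfun t ζ).deriv

lemma hasDerivAt_p1 (t ζ : ℝ) : HasDerivAt (p1 t) (p2 t ζ) ζ := by
  have hz : (1 + ζ^2) ≠ 0 := by positivity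
  have hw : (1 + (t-ζ)^2) ≠ 0 := by positivity
  have h1 : HasDerivAt (fun ζ : ℝ => 1 + ζ^2) (2*ζ) ζ := by
    simpa using (hasDerivAt_pow 2 ζ).const_add 1
  have h2 : HasDerivAt (fun ζ : ℝ => 1 + (t-ζ)^2) (2*(t-ζ)*(-1)) ζ := by
    have hb : HasDerivAt (fun ζ : ℝ => t - ζ) (-1) ζ := by
      simpa [Pi.sub_def] using (hasDerivAt_const ζ t).sub (hasDerivAt_id ζ)
    have := ((hasDerivAt_pow 2 (t-ζ)).comp ζ hb).const_add 1
    simpa [mul_comm, mul_assoc] using this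
  have := (h1.inv hz).sub (h2.inv hw)
  unfold p1 p2
  refine this.congr_deriv (Eq.symm ?_)
  field_simp

lemma deriv2_pfun (t ζ : ℝ) : deriv (deriv (pfun t)) ζ = p2 t ζ := by
  rw [deriv_pfun]; exact (hasDerivAt_p1 t ζ).deriv

noncomputable def g1 (t : ℝ) (θ : ℝ) : ℝ :=
  -p1 t (Real.cos θ / Real.sin θ) / (Real.sin θ)^3 -
    pfun t (Real.cos θ / Real.sin θ) * Real.cos θ / (Real.sin θ)^2

noncomputable def g2 (t : ℝ) (θ : ℝ) : ℝ :=
  p2 t (Real.cos θ / Real.sin θ) / (Real.sin θ)^5 +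
    4 * Real.cos θ * p1 t (Real.cos θ / Real.sin θ) / (Real.sin θ)^4 +
    pfun t (Real.cos θ / Real.sin θ) *
      ((Real.sin θ)^2 + 2*(Real.cos θ)^2) / (Real.sin θ)^3

lemma hasDerivAt_cot (θ : ℝ) (hs : Real.sin θ ≠ 0) :
    HasDerivAt (fun θ : ℝ => Real.cos θ / Real.sin θ) (-(1/(Real.sin θ)^2)) θ := by
  have := (Real.hasDerivAt_cos θ).div (Real.hasDerivAt_sin θ) hs
  refine this.congr_deriv (Eq.symm ?_)
  have hpy := Real.sin_sq_add_cos_sq θ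
  field_simp
  nlinarith [hpy]

lemma hasDerivAt_gfun (t θ : ℝ) (hs : Real.sin θ ≠ 0) :
    HasDerivAt (gfun t) (g1 t θ) θ := by
  have hc := hasDerivAt_cot θ hs
  have hp : HasDerivAt (fun θ : ℝ => pfun t (Real.cos θ / Real.sin θ))
      (p1 t (Real.cos θ / Real.sin θ) * (-(1/(Real.sin θ)^2))) θ :=
    (hasDerivAt_pfun t _).comp θ hc
  have := hp.div (Real.hasDerivAt_sin θ) hs
  have h2 : HasDerivAt (gfun t)
      ((p1 t (Real.cos θ / Real.sin θ) * (-(1/(Real.sin θ)^2)) * Real.sin θ -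
        pfun t (Real.cos θ / Real.sin θ) * Real.cos θ) / (Real.sin θ)^2) θ := this
  convert h2 using 1
  unfold g1
  field_simp

lemma hasDerivAt_g1 (t θ : ℝ) (hs : Real.sin θ ≠ 0) :
    HasDerivAt (g1 t) (g2 t θ) θ := by
  have hc := hasDerivAt_cot θ hs
  have hp : HasDerivAt (fun θ : ℝ => pfun t (Real.cos θ / Real.sin θ))
      (p1 t (Real.cos θ / Real.sin θ) * (-(1/(Real.sin θ)^2))) θ :=
    (hasDerivAt_pfun t _).comp θ hc
  have hp1 : HasDerivAt (fun θ : ℝ => p1 t (Real.cos θ / Real.sin θ))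
      (p2 t (Real.cos θ / Real.sin θ) * (-(1/(Real.sin θ)^2))) θ :=
    (hasDerivAt_p1 t _).comp θ hc
  have hs3 : HasDerivAt (fun θ : ℝ => (Real.sin θ)^3)
      (3 * (Real.sin θ)^2 * Real.cos θ) θ := by
    have := ((hasDerivAt_pow 3 (Real.sin θ)).comp θ (Real.hasDerivAt_sin θ))
    simpa [mul_comm, mul_assoc, Function.comp_def] using this
  have hs2 : HasDerivAt (fun θ : ℝ => (Real.sin θ)^2)
      (2 * Real.sin θ * Real.cos θ) θ := by
    have := ((hasDerivAt_pow 2 (Real.sin θ)).comp θ (Real.hasDerivAt_sin θ))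
    simpa [mul_comm, mul_assoc, Function.comp_def] using this
  have hs3' : (Real.sin θ)^3 ≠ 0 := pow_ne_zero _ hs
  have hs2' : (Real.sin θ)^2 ≠ 0 := pow_ne_zero _ hs
  have term1 := (hp1.neg).div hs3 hs3'
  have term2 := (hp.mul (Real.hasDerivAt_cos θ)).div hs2 hs2'
  have := term1.sub term2
  have heq : g1 t = (fun θ : ℝ =>
      -p1 t (Real.cos θ / Real.sin θ) / (Real.sin θ)^3 -
        pfun t (Real.cos θ / Real.sin θ) * Real.cos θ / (Real.sin θ)^2) := rfl
  rw [heq]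
  refine this.congr_deriv (Eq.symm ?_)
  unfold g2
  simp only [Pi.neg_apply, Pi.mul_apply]
  field_simp
  ring

theorem h_t_curvature_combination (t : ℝ) (ht : 0 < t) (θ : ℝ)
    (hθ : θ ∈ Set.Ioo 0 Real.pi) :
    ((Real.arctan (t - Real.cos θ / Real.sin θ) +
        Real.arctan (Real.cos θ / Real.sin θ)) / Real.sin θ) ^ 2 +
      2 * (deriv (fun θ : ℝ => (Real.arctan (t - Real.cos θ / Real.sin θ) +
          Real.arctan (Real.cos θ / Real.sin θ)) / Real.sin θ) θ) ^ 2 -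
      deriv (deriv (fun θ : ℝ => (Real.arctan (t - Real.cos θ / Real.sin θ) +
          Real.arctan (Real.cos θ / Real.sin θ)) / Real.sin θ)) θ *
        ((Real.arctan (t - Real.cos θ / Real.sin θ) +
          Real.arctan (Real.cos θ / Real.sin θ)) / Real.sin θ) =
    ((Real.sin θ)⁻¹) ^ 6 *
      (2 * (deriv (fun ζ : ℝ => Real.arctan (t - ζ) + Real.arctan ζ)
          (Real.cos θ / Real.sin θ)) ^ 2 -
        (Real.arctan (t - Real.cos θ / Real.sin θ) +
            Real.arctan (Real.cos θ / Real.sin θ)) *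
          deriv (deriv (fun ζ : ℝ => Real.arctan (t - ζ) + Real.arctan ζ))
            (Real.cos θ / Real.sin θ)) := by
  have hs : Real.sin θ ≠ 0 := ne_of_gt (Real.sin_pos_of_pos_of_lt_pi hθ.1 hθ.2)
  have e1 : (fun θ : ℝ => (Real.arctan (t - Real.cos θ / Real.sin θ) +
      Real.arctan (Real.cos θ / Real.sin θ)) / Real.sin θ) = gfun t := rfl
  have e2 : (fun ζ : ℝ => Real.arctan (t - ζ) + Real.arctan ζ) = pfun t := rfl
  rw [e1, e2]
  have hd1 : deriv (gfun t) θ = g1 t θ := (hasDerivAt_gfun t θ hs).deriv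
  have hev : deriv (gfun t) =ᶠ[nhds θ] g1 t := by
    have hU : IsOpen {x : ℝ | Real.sin x ≠ 0} :=
      isOpen_compl_singleton.preimage Real.continuous_sin
    filter_upwards [hU.mem_nhds hs] with x hx
    exact (hasDerivAt_gfun t x hx).deriv
  have hd2 : deriv (deriv (gfun t)) θ = g2 t θ := by
    rw [hev.deriv_eq]
    exact (hasDerivAt_g1 t θ hs).deriv
  rw [hd1, hd2, deriv2_pfun, deriv_pfun]
  have hp : (Real.arctan (t - Real.cos θ / Real.sin θ) +
      Real.arctan (Real.cos θ / Real.sin θ)) = pfun t (Real.cos θ / Real.sin θ) := rfl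
  rw [hp]
  unfold g1 g2
  field_simp
  ring
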